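/- Let f ∈ C¹(ℝ) and v ∈ C¹(𝕋) with |f'|_∞ |v'|_∞ Δt < 1/3, Δt ≤ 1. Define G(ξ,x) = ξ - v(x - f(ξ)Δt). Then ∂_ξ G(ξ,x) ≥ 2/3 for all (ξ,x), and for each x ∈ 𝕋 there exists a unique ξ(x) ∈ ℝ with G(ξ(x),x) = 0; hence there is a unique w : 𝕋 → ℝ with w(x) = v(x - f(w(x))Δt) for all x. -/

import Mathlib

theorem stmt11 (f v : ℝ → ℝ) (Δt F V : ℝ)
    (hf : ContDiff ℝ 1 f) (hv : ContDiff ℝ 1 v) (hvper : Function.Periodic v 1)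
    (hF : ∀ x, |deriv f x| ≤ F) (hV : ∀ x, |deriv v x| ≤ V)
    (hsmall : F * V * Δt < 1 / 3) (hΔt0 : 0 < Δt) (hΔt1 : Δt ≤ 1) :
    (∀ ξ x : ℝ, 2 / 3 ≤ deriv (fun ξ' => ξ' - v (x - f ξ' * Δt)) ξ) ∧
    (∀ x : ℝ, ∃! ξ : ℝ, ξ - v (x - f ξ * Δt) = 0) ∧
    (∃! w : ℝ → ℝ, ∀ x, w x = v (x - f (w x) * Δt)) := by
  have hdf := hf.differentiable one_ne_zero
  have hdv := hv.differentiable one_ne_zero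
  have hG : ∀ ξ x : ℝ, HasDerivAt (fun ξ' => ξ' - v (x - f ξ' * Δt))
      (1 - deriv v (x - f ξ * Δt) * (-(deriv f ξ * Δt))) ξ := by
    intro ξ x
    have h1 : HasDerivAt (fun ξ' => x - f ξ' * Δt) (-(deriv f ξ * Δt)) ξ :=
      ((hdf ξ).hasDerivAt.mul_const Δt).const_sub x
    have h2 := ((hdv _).hasDerivAt.comp ξ h1)
    exact (hasDerivAt_id ξ).sub h2
  have habs : ∀ ξ x : ℝ, |deriv v (x - f ξ * Δt) * (-(deriv f ξ * Δt))| < 1 / 3 := by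
    intro ξ x
    have hV' := hV (x - f ξ * Δt)
    have hF' := hF ξ
    have h1 : |deriv v (x - f ξ * Δt) * (-(deriv f ξ * Δt))|
        = |deriv v (x - f ξ * Δt)| * (|deriv f ξ| * Δt) := by
      rw [abs_mul, abs_neg, abs_mul, abs_of_pos hΔt0]
    rw [h1]
    calc |deriv v (x - f ξ * Δt)| * (|deriv f ξ| * Δt)
        ≤ V * (F * Δt) := by
          apply mul_le_mul hV' (mul_le_mul_of_nonneg_right hF' hΔt0.le)
            (by positivity) ((abs_nonneg _).trans hV')
      _ = F * V * Δt := by ring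
      _ < 1 / 3 := hsmall
  have hderiv23 : ∀ ξ x : ℝ, 2 / 3 ≤ deriv (fun ξ' => ξ' - v (x - f ξ' * Δt)) ξ := by
    intro ξ x
    rw [(hG ξ x).deriv]
    have := habs ξ x
    have h2 := le_abs_self (deriv v (x - f ξ * Δt) * (-(deriv f ξ * Δt)))
    linarith
  refine ⟨hderiv23, ?_⟩
  -- bound on v
  obtain ⟨M, hM⟩ : ∃ M : ℝ, ∀ y, |v y| ≤ M := by
    obtain ⟨M, hM⟩ := (isCompact_Icc (a := (0:ℝ)) (b := 1)).exists_bound_of_continuousOn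
      hv.continuous.continuousOn
    refine ⟨M, fun y => ?_⟩
    have hy : v (Int.fract y) = v y := by
      have h := hvper.sub_int_mul_eq (x := y) ⌊y⌋
      rw [mul_one] at h
      exact h
    have hmem : Int.fract y ∈ Set.Icc (0:ℝ) 1 :=
      ⟨Int.fract_nonneg y, (Int.fract_lt_one y).le⟩
    have := hM _ hmem
    rw [← hy]
    simpa using this
  have hM0 : 0 ≤ M := (abs_nonneg _).trans (hM 0)
  have hroot : ∀ x : ℝ, ∃! ξ : ℝ, ξ - v (x - f ξ * Δt) = 0 := by
    intro x
    have hmono : StrictMono (fun ξ' => ξ' - v (x - f ξ' * Δt)) :=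
      strictMono_of_deriv_pos (fun ξ => lt_of_lt_of_le (by norm_num) (hderiv23 ξ x))
    have hcont : Continuous (fun ξ' => ξ' - v (x - f ξ' * Δt)) :=
      continuous_id.sub (hv.continuous.comp
        (continuous_const.sub ((hf.continuous.comp continuous_id).mul continuous_const)))
    have ha : (fun ξ' => ξ' - v (x - f ξ' * Δt)) (-M) ≤ 0 := by
      have := (abs_le.mp (hM (x - f (-M) * Δt))).1
      simp only
      linarith
    have hb : (0:ℝ) ≤ (fun ξ' => ξ' - v (x - f ξ' * Δt)) M := by
      have := (abs_le.mp (hM (x - f M * Δt))).2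
      simp only
      linarith
    have hsub := intermediate_value_Icc (by linarith : (-M:ℝ) ≤ M) hcont.continuousOn
    obtain ⟨ξ, _, hξ⟩ := hsub ⟨ha, hb⟩
    exact ⟨ξ, hξ, fun ξ' hξ' => hmono.injective (hξ'.trans hξ.symm)⟩
  refine ⟨hroot, ?_⟩
  set w : ℝ → ℝ := fun x => (hroot x).exists.choose with hw
  have hwroot : ∀ x, w x - v (x - f (w x) * Δt) = 0 := fun x => (hroot x).exists.choose_spec
  refine ⟨w, fun x => by linarith [hwroot x], ?_⟩
  intro w' hw'
  funext x
  have h1 : w' x - v (x - f (w' x) * Δt) = 0 := by linarith [hw' x]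
  exact (hroot x).unique h1 (hwroot x)
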